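/- Let d ≥ 2, fix j ∈ {1,…,d−1} and i ∈ {1,…,j}, let r0 = rd = 1 and r1,…,r_{d−1} be positive integers, and let n, r'_i, r, l be positive integers and ε ∈ (0,1) satisfying: r'_i ≤ n/6, n > max{200, Σ_{k=1}^{d−1} r_{k−1}·r_k}, r ≤ Σ_{k=1}^{d−1} r_{k−1}·r_k, and l > max{27·log(n/ε) + 9·log(2r/ε) + 18, 6·r'_i}. Consider n − r'_i columns of the j-th unfolding of a random sampling pattern: for each column, the set of observed positions is the image of l independent draws, each uniformly distributed over the column's n^j cells {1,…,n}^j, with draws independent across columns. Then with probability at least 1 − ε/r, for every nonempty subset T of these n − r'_i columns, the number of distinct values of the i-th coordinate appearing among the observed positions of the columns in T is at least |T| + r'_i. -/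

import Mathlib

open Finset Real

section Stmt10Aux
variable {n ri' l jd : ℕ}


private lemma pow_self_le_aux (k : ℕ) : ((k+1 : ℕ) : ℝ) ^ k ≤ 3 * (k : ℝ) ^ k := by
  rcases Nat.eq_zero_or_pos k with hk0 | hk0
  · subst hk0; norm_num
  · have hkpos : (0:ℝ) < k := by exact_mod_cast hk0
    have h1 : ((k+1:ℕ):ℝ) = (k:ℝ) * (1 + 1/k) := by push_cast; field_simp
    have h2 : (1 + 1/(k:ℝ)) ≤ Real.exp (1/k) := by
      have := Real.add_one_le_exp (1/(k:ℝ)); linarith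
    calc ((k+1:ℕ):ℝ)^k = (k:ℝ)^k * (1+1/(k:ℝ))^k := by rw [h1, mul_pow]
    _ ≤ (k:ℝ)^k * (Real.exp (1/k))^k := by
        gcongr
    _ = (k:ℝ)^k * Real.exp 1 := by
        rw [← Real.exp_nat_mul]
        congr 1
        field_simp
    _ ≤ 3 * (k:ℝ)^k := by
        have h3 : Real.exp 1 ≤ 3 := by
          have := Real.exp_one_lt_d9; linarith
        have : (0:ℝ) ≤ (k:ℝ)^k := by positivity
        nlinarith

private lemma pow_self_le_three_pow_mul_factorial (s : ℕ) :
    (s : ℝ) ^ s ≤ 3 ^ s * (Nat.factorial s : ℝ) := by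
  induction s with
  | zero => simp
  | succ k ih =>
    have h := pow_self_le_aux k
    have hk0 : (0:ℝ) ≤ (k:ℝ)^k := by positivity
    calc ((k+1 : ℕ):ℝ) ^ (k+1) = ((k+1:ℕ):ℝ) * ((k+1:ℕ):ℝ)^k := by ring
    _ ≤ ((k+1:ℕ):ℝ) * (3 * (k:ℝ)^k) := by
        have : (0:ℝ) ≤ ((k+1:ℕ):ℝ) := by positivity
        nlinarith
    _ ≤ ((k+1:ℕ):ℝ) * (3 * (3^k * (Nat.factorial k : ℝ))) := by
        have : (0:ℝ) ≤ ((k+1:ℕ):ℝ) := by positivity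
        nlinarith
    _ = 3^(k+1) * ((k+1) * (Nat.factorial k : ℝ)) := by push_cast; ring
    _ = 3^(k+1) * (Nat.factorial (k+1) : ℝ) := by
        rw [Nat.factorial_succ]; push_cast; ring



private def EV (n jd : ℕ) (i' : Fin jd) (S : Finset (Fin n)) : Finset (Fin jd → Fin n) :=
  Fintype.piFinset fun m => if m = i' then S else univ

private lemma card_EV (i' : Fin jd) (S : Finset (Fin n)) :
    (EV n jd i' S).card = S.card * n ^ (jd - 1) := by
  rw [EV, Fintype.card_piFinset]
  rw [← Finset.mul_prod_erase univ _ (mem_univ i')]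
  simp only [if_pos rfl]
  congr 1
  have : ∀ m ∈ univ.erase i', (if m = i' then S else (univ : Finset (Fin n))).card = n := by
    intro m hm
    rw [if_neg (Finset.ne_of_mem_erase hm), card_univ, Fintype.card_fin]
  rw [Finset.prod_congr rfl this, Finset.prod_const,
    Finset.card_erase_of_mem (mem_univ i'), card_univ, Fintype.card_fin]

private def EE (n ri' l jd : ℕ) (i' : Fin jd) (T : Finset (Fin (n - ri')))
    (S : Finset (Fin n)) : Finset (Fin (n - ri') → Fin l → (Fin jd → Fin n)) :=
  Fintype.piFinset fun c =>
    if c ∈ T then Fintype.piFinset (fun _ : Fin l => EV n jd i' S) else univ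

private lemma card_EE (i' : Fin jd) (T : Finset (Fin (n - ri'))) (S : Finset (Fin n)) :
    (EE n ri' l jd i' T S).card
      = ((S.card * n ^ (jd - 1)) ^ (l * T.card)) * ((n ^ jd) ^ (l * ((n - ri') - T.card))) := by
  rw [EE, Fintype.card_piFinset]
  have h1 : ∀ c : Fin (n - ri'),
      ((if c ∈ T then Fintype.piFinset (fun _ : Fin l => EV n jd i' S) else univ).card)
      = if c ∈ T then (S.card * n ^ (jd - 1)) ^ l else (n ^ jd) ^ l := by
    intro c
    split_ifs with h
    · rw [Fintype.card_piFinset]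
      simp [card_EV]
    · rw [card_univ]
      simp [Fintype.card_fin]
  simp only [h1]
  rw [← Finset.prod_mul_prod_compl T]
  have h2 : ∀ c ∈ T, (if c ∈ T then (S.card * n ^ (jd - 1)) ^ l else (n ^ jd) ^ l)
      = (S.card * n ^ (jd - 1)) ^ l := fun c hc => if_pos hc
  have h3 : ∀ c ∈ Tᶜ, (if c ∈ T then (S.card * n ^ (jd - 1)) ^ l else (n ^ jd) ^ l)
      = (n ^ jd) ^ l := fun c hc => if_neg (Finset.mem_compl.1 hc)
  rw [Finset.prod_congr rfl h2, Finset.prod_congr rfl h3, Finset.prod_const,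
    Finset.prod_const, Finset.card_compl, Fintype.card_fin, ← pow_mul, ← pow_mul,
    mul_comm l T.card, mul_comm l _]

private lemma count_bad_le (n ri' l jd : ℕ) (i' : Fin jd) (hri' : 0 < ri') (hrin : ri' < n) :
    ((univ.filter fun ω : Fin (n - ri') → Fin l → (Fin jd → Fin n) =>
        ¬ ∀ T : Finset (Fin (n - ri')), T.Nonempty →
            T.card + ri' ≤ ((T.biUnion fun c => univ.image (ω c)).image fun v => v i').card).card)
      ≤ ∑ t ∈ Icc 1 (n - ri'),
          (n - ri').choose t * (n.choose (t + ri' - 1) *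
            ((((t + ri' - 1) * n ^ (jd - 1)) ^ (l * t)) * ((n ^ jd) ^ (l * ((n - ri') - t))))) := by
  classical
  set N := n - ri' with hN
  set g : ℕ → ℕ := fun t => n.choose (t + ri' - 1) *
      ((((t + ri' - 1) * n ^ (jd - 1)) ^ (l * t)) * ((n ^ jd) ^ (l * (N - t)))) with hg
  have hsub : (univ.filter fun ω : Fin N → Fin l → (Fin jd → Fin n) =>
        ¬ ∀ T : Finset (Fin N), T.Nonempty →
            T.card + ri' ≤ ((T.biUnion fun c => univ.image (ω c)).image fun v => v i').card)
      ⊆ (univ.filter fun T : Finset (Fin N) => T.Nonempty).biUnion fun T =>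
          (powersetCard (T.card + ri' - 1) univ).biUnion fun S => EE n ri' l jd i' T S := by
    intro ω hω
    rw [mem_filter] at hω
    push_neg at hω
    obtain ⟨-, T, hTne, hTcard⟩ := hω
    set A := (T.biUnion fun c => univ.image (ω c)).image fun v => v i' with hA
    have hAcard : A.card ≤ T.card + ri' - 1 := by omega
    have hsn : T.card + ri' - 1 ≤ (univ : Finset (Fin n)).card := by
      have hTle : T.card ≤ N := by simpa using Finset.card_le_univ T
      simp only [card_univ, Fintype.card_fin]
      omega
    obtain ⟨S, hAS, -, hScard⟩ :=
      Finset.exists_subsuperset_card_eq (Finset.subset_univ A) hAcard hsn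
    refine Finset.mem_biUnion.2 ⟨T, by simp [hTne], Finset.mem_biUnion.2 ⟨S, ?_, ?_⟩⟩
    · exact Finset.mem_powersetCard.2 ⟨Finset.subset_univ S, hScard⟩
    · rw [EE, Fintype.mem_piFinset]
      intro c
      split_ifs with hc
      · rw [Fintype.mem_piFinset]
        intro k
        rw [EV, Fintype.mem_piFinset]
        intro m
        split_ifs with hm
        · subst hm
          apply hAS
          exact Finset.mem_image.2 ⟨ω c k, Finset.mem_biUnion.2
            ⟨c, hc, Finset.mem_image.2 ⟨k, mem_univ k, rfl⟩⟩, rfl⟩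
        · exact mem_univ _
      · exact mem_univ _
  have step1 : ((univ.filter fun ω : Fin N → Fin l → (Fin jd → Fin n) =>
        ¬ ∀ T : Finset (Fin N), T.Nonempty →
            T.card + ri' ≤ ((T.biUnion fun c => univ.image (ω c)).image fun v => v i').card).card)
      ≤ ∑ T ∈ (univ.filter fun T : Finset (Fin N) => T.Nonempty), g T.card := by
    refine (Finset.card_le_card hsub).trans ?_
    refine (Finset.card_biUnion_le).trans ?_
    refine Finset.sum_le_sum fun T _ => ?_
    refine (Finset.card_biUnion_le).trans ?_
    have : ∀ S ∈ powersetCard (T.card + ri' - 1) (univ : Finset (Fin n)),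
        (EE n ri' l jd i' T S).card
          = (((T.card + ri' - 1) * n ^ (jd - 1)) ^ (l * T.card)) * ((n ^ jd) ^ (l * (N - T.card))) := by
      intro S hS
      rw [card_EE, (Finset.mem_powersetCard.1 hS).2]
    rw [Finset.sum_congr rfl this, Finset.sum_const, Finset.card_powersetCard, card_univ,
      Fintype.card_fin, smul_eq_mul, hg]
  refine step1.trans ?_
  -- regroup over cardinalities
  have e1 : ∑ T ∈ (univ : Finset (Finset (Fin N))), g T.card
      = ∑ t ∈ range (N + 1), N.choose t * g t := by
    rw [← Finset.powerset_univ, Finset.sum_powerset]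
    refine Finset.sum_congr (by rw [card_univ, Fintype.card_fin]) fun t ht => ?_
    rw [Finset.sum_powersetCard, card_univ, Fintype.card_fin, smul_eq_mul]
  have e2 := Finset.sum_filter_add_sum_filter_not (univ : Finset (Finset (Fin N)))
      (fun T => T.Nonempty) (fun T => g T.card)
  have e3 : (univ.filter fun T : Finset (Fin N) => ¬ T.Nonempty) = {∅} := by
    ext T
    simp [Finset.not_nonempty_iff_eq_empty]
  have e4 : ∑ T ∈ (univ.filter fun T : Finset (Fin N) => ¬ T.Nonempty), g T.card = g 0 := by
    rw [e3, Finset.sum_singleton, Finset.card_empty]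
  have e5 : ∑ t ∈ range (N + 1), N.choose t * g t
      = N.choose 0 * g 0 + ∑ t ∈ Icc 1 N, N.choose t * g t := by
    rw [Finset.range_eq_Ico, Finset.sum_eq_sum_Ico_succ_bot (Nat.succ_pos N), Nat.succ_eq_add_one, Finset.Ico_add_one_right_eq_Icc]
  rw [Nat.choose_zero_right, one_mul] at e5
  rw [e4] at e2
  rw [e1, e5] at e2
  simp only [hg] at e2 ⊢
  linarith


private lemma glue {α : Type*} [Fintype α] (P : α → Prop) [DecidablePred P] (ε r : ℝ)
    (h0 : 0 < (Fintype.card α : ℝ))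
    (hbad : ((univ.filter (fun a => ¬ P a)).card : ℝ) ≤ (ε/r) * Fintype.card α) :
    1 - ε/r ≤ ((univ.filter P).card : ℝ) / Fintype.card α := by
  have hsum : (univ.filter P).card + (univ.filter fun a => ¬ P a).card = Fintype.card α := by
    rw [Finset.card_filter_add_card_filter_not, Finset.card_univ]
  have hle : (univ.filter fun a => ¬ P a).card ≤ Fintype.card α := by omega
  have hcast : ((univ.filter P).card : ℝ)
      = (Fintype.card α : ℝ) - ((univ.filter fun a => ¬ P a).card : ℝ) := by
    have : (univ.filter P).card = Fintype.card α - (univ.filter fun a => ¬ P a).card := by omega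
    rw [this, Nat.cast_sub hle]
  rw [hcast, sub_div, div_self (ne_of_gt h0)]
  have : ((univ.filter fun a => ¬ P a).card : ℝ) / Fintype.card α ≤ ε/r := by
    rw [div_le_iff₀ h0]
    exact hbad
  linarith only [this]

end Stmt10Aux

set_option maxHeartbeats 1000000 in
private lemma analytic (n ri' r l : ℕ) (ε : ℝ)
    (hn : 200 < n) (hri'0 : 0 < ri') (hrpos : 0 < r) (hrn : r ≤ n)
    (hε0 : 0 < ε) (hε1 : ε < 1)
    (hri'n : (ri' : ℝ) ≤ (n : ℝ) / 6)
    (hl1 : 27 * Real.log (n / ε) + 9 * Real.log (2 * r / ε) + 18 < l)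
    (hl2 : 6 * (ri' : ℝ) < l) :
    ∑ t ∈ Icc 1 (n - ri'), ((n - ri').choose t : ℝ) * ((n.choose (t + ri' - 1) : ℝ) *
      ((((t + ri' - 1 : ℕ) : ℝ) / n) ^ (l * t))) ≤ ε / r := by
  have hn0 : (0:ℝ) < n := by positivity
  have hn201 : (201:ℝ) ≤ n := by exact_mod_cast hn
  have hrin : ri' < n := by
    have : (ri':ℝ) < n := by linarith only [hri'n, hn201]
    exact_mod_cast this
  set N := n - ri' with hN
  have hNr : (N:ℝ) = (n:ℝ) - ri' := by
    rw [hN, Nat.cast_sub hrin.le]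
  have hr0 : (0:ℝ) < r := by exact_mod_cast hrpos
  have hr1 : (1:ℝ) ≤ r := by exact_mod_cast hrpos
  have ha : (24/5:ℝ) ≤ Real.log n := by
    have h128 : (128:ℝ) ≤ n := by linarith
    have h1 : Real.log ((2:ℝ)^(7:ℕ)) ≤ Real.log n := by
      apply Real.log_le_log (by norm_num)
      norm_num at h128 ⊢; linarith only [h128]
    rw [Real.log_pow] at h1
    push_cast at h1
    linarith only [h1, Real.log_two_gt_d9]
  have hb : 0 ≤ Real.log r := Real.log_nonneg hr1
  have he : Real.log ε ≤ 0 := Real.log_nonpos hε0.le hε1.le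
  have hlog2l : (69/100:ℝ) < Real.log 2 := by
    linarith only [Real.log_two_gt_d9]
  have hlog2u : Real.log 2 < (7/10:ℝ) := by
    linarith only [Real.log_two_lt_d9]
  have hlog3 : Real.log 3 ≤ (111/100:ℝ) := by
    have h5 : Real.log ((3:ℝ)^(5:ℕ)) ≤ Real.log ((2:ℝ)^(8:ℕ)) :=
      Real.log_le_log (by norm_num) (by norm_num)
    rw [Real.log_pow, Real.log_pow] at h5
    push_cast at h5
    linarith only [h5, Real.log_two_lt_d9]
  have hlog127 : (51/100:ℝ) ≤ Real.log (12/7) := by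
    have h4 : Real.log ((2:ℝ)^(3:ℕ)) ≤ Real.log (((12:ℝ)/7)^(4:ℕ)) :=
      Real.log_le_log (by norm_num) (by norm_num)
    rw [Real.log_pow, Real.log_pow] at h4
    push_cast at h4
    linarith only [h4, Real.log_two_gt_d9]
  have hL1 : Real.log ((n:ℝ)/ε) = Real.log n - Real.log ε :=
    Real.log_div (ne_of_gt hn0) (ne_of_gt hε0)
  have hL2 : Real.log (2*(r:ℝ)/ε) = Real.log 2 + Real.log r - Real.log ε := by
    rw [Real.log_div (by positivity) (ne_of_gt hε0), Real.log_mul (by norm_num) (by positivity)]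
  rw [hL1, hL2] at hl1
  have hlr0 : (0:ℝ) < l := by linarith only [hl1, ha, hb, he, hlog2l]
  have hri1 : (1:ℝ) ≤ ri' := by exact_mod_cast hri'0
  have hlr6 : (6:ℝ) ≤ l := by linarith only [hl2, hri1]
  have hri'l : 6 * ri' < l := by exact_mod_cast hl2
  have hεr : (0:ℝ) < ε / (4*r) := by positivity
  have hlogεr : Real.log (ε/(4*r)) = Real.log ε - (2*Real.log 2 + Real.log r) := by
    rw [Real.log_div (ne_of_gt hε0) (by positivity), Real.log_mul (by norm_num) (by positivity),
      show (4:ℝ) = 2^(2:ℕ) by norm_num, Real.log_pow]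
    push_cast; ring
  -- the small-t geometric ratio
  set q := (n:ℝ) * (3:ℝ) ^ (1 + (l:ℝ)/6) * ((7:ℝ)/12) ^ ((2/3)*(l:ℝ)) with hqdef
  have hq0 : 0 < q := by
    apply mul_pos (mul_pos hn0 _) _
    · exact Real.rpow_pos_of_pos (by norm_num) _
    · exact Real.rpow_pos_of_pos (by norm_num) _
  have hlog712 : Real.log ((7:ℝ)/12) = - Real.log (12/7) := by
    rw [show ((7:ℝ)/12) = ((12:ℝ)/7)⁻¹ by norm_num, Real.log_inv]
  have hlogq : Real.log q
      = Real.log n + (1+(l:ℝ)/6)*Real.log 3 - ((2/3)*(l:ℝ))*Real.log (12/7) := by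
    rw [hqdef, Real.log_mul (by positivity) (by positivity),
      Real.log_mul (by positivity) (by positivity),
      Real.log_rpow (by norm_num), Real.log_rpow (by norm_num), hlog712]
    ring
  have hq_log_le : Real.log q ≤ Real.log (ε/(4*r)) := by
    have f1 : (1+(l:ℝ)/6)*Real.log 3 ≤ (1+(l:ℝ)/6)*(111/100) :=
      mul_le_mul_of_nonneg_left hlog3 (by linarith only [hlr0])
    have f2 : ((2/3)*(l:ℝ))*(51/100) ≤ ((2/3)*(l:ℝ))*Real.log (12/7) :=
      mul_le_mul_of_nonneg_left hlog127 (by linarith only [hlr0])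
    rw [hlogq, hlogεr]
    linarith only [f1, f2, hl1, ha, hb, he, hlog2l, hlog2u]
  have hqle : q ≤ ε/(4*r) := by
    have h := Real.exp_le_exp.2 hq_log_le
    rwa [Real.exp_log hq0, Real.exp_log hεr] at h
  have hεr4 : ε/(4*r) ≤ 1/4 := by
    rw [div_le_iff₀ (by positivity)]
    linarith only [hε1, hr1]
  have hqhalf : q ≤ 1/2 := by linarith only [hqle, hεr4]
  -- the large-t quantities
  set A := (n:ℝ) * Real.exp (-(5/12)*(l:ℝ)) with hAdef
  set p := (n:ℝ)^2 * Real.exp (-(5/12)*(l:ℝ)) with hpdef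
  have hA0 : 0 < A := by positivity
  have hp0 : 0 < p := by positivity
  have hlogA : Real.log A = Real.log n + (-(5/12)*(l:ℝ)) := by
    rw [hAdef, Real.log_mul (by positivity) (by positivity), Real.log_exp]
  have hlogp : Real.log p = 2*Real.log n + (-(5/12)*(l:ℝ)) := by
    rw [hpdef, Real.log_mul (by positivity) (by positivity), Real.log_exp, Real.log_pow]
    push_cast; ring
  have hAle : A ≤ ε/(4*r) := by
    have h : Real.log A ≤ Real.log (ε/(4*r)) := by
      rw [hlogA, hlogεr]
      linarith only [hl1, ha, hb, he, hlog2l, hlog2u]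
    have h2 := Real.exp_le_exp.2 h
    rwa [Real.exp_log hA0, Real.exp_log hεr] at h2
  have hphalf : p ≤ 1/2 := by
    have hhalf : (0:ℝ) < 1/2 := by norm_num
    have hlh : Real.log (1/2) = - Real.log 2 := by
      rw [show (1/2:ℝ) = (2:ℝ)⁻¹ by norm_num, Real.log_inv]
    have h : Real.log p ≤ Real.log (1/2) := by
      rw [hlogp, hlh]
      linarith only [hl1, ha, hb, he, hlog2l, hlog2u]
    have h2 := Real.exp_le_exp.2 h
    rwa [Real.exp_log hp0, Real.exp_log hhalf] at h2
  -- per-term bounds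
  have small_bound : ∀ t ∈ Icc 1 N, 2*t ≤ N →
      ((N.choose t : ℝ) * ((n.choose (t + ri' - 1) : ℝ) *
        ((((t + ri' - 1 : ℕ) : ℝ) / n) ^ (l * t)))) ≤ q ^ t := by
    intro t ht h2t
    obtain ⟨ht1, htN⟩ := mem_Icc.1 ht
    have ht1r : (1:ℝ) ≤ t := by exact_mod_cast ht1
    set s := t + ri' - 1 with hs
    have hsr : (s:ℝ) = (t:ℝ) + ri' - 1 := by
      rw [hs, Nat.cast_sub (by omega), Nat.cast_add, Nat.cast_one]
    have hl7 : 7 ≤ l := by omega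
    have hslt : s ≤ l * t := by
      have h2 : l - 1 ≤ t * (l-1) := Nat.le_mul_of_pos_left _ (by omega)
      have hmul : t * l = t * (l-1) + t := by
        conv_lhs => rw [show l = (l-1)+1 by omega]
        rw [Nat.mul_succ]
      have : l * t = t * l := Nat.mul_comm l t
      omega
    have c1 : ((N.choose t):ℝ) ≤ (n:ℝ)^t := by
      have h1 : N.choose t ≤ N ^ t := Nat.choose_le_pow N t
      have h2 : N ^ t ≤ n ^ t := Nat.pow_le_pow_left (by omega) t
      exact_mod_cast h1.trans h2
    have key2 : ((n.choose s):ℝ) * ((s:ℝ)/n)^s ≤ 3^s := by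
      have hch := Nat.choose_le_pow_div (α := ℝ) s n
      have hfac : (0:ℝ) < (Nat.factorial s : ℝ) := by
        exact_mod_cast Nat.factorial_pos s
      calc ((n.choose s):ℝ) * ((s:ℝ)/n)^s
          ≤ ((n:ℝ)^s / (Nat.factorial s : ℝ)) * ((s:ℝ)/n)^s := by
            apply mul_le_mul_of_nonneg_right _ (by positivity)
            exact_mod_cast hch
        _ = (s:ℝ)^s / (Nat.factorial s : ℝ) := by
            rw [div_pow]; field_simp
        _ ≤ 3^s := by
            rw [div_le_iff₀ hfac]
            exact pow_self_le_three_pow_mul_factorial s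
    have powsplit : ((s:ℝ)/n)^(l*t) = ((s:ℝ)/n)^s * ((s:ℝ)/n)^(l*t - s) := by
      rw [← pow_add, Nat.add_sub_cancel' hslt]
    have c3 : (s:ℝ)/n ≤ 7/12 := by
      rw [div_le_iff₀ hn0]
      have h2tr : 2*(t:ℝ) ≤ N := by exact_mod_cast h2t
      rw [hsr]
      rw [hNr] at h2tr
      linarith only [h2tr, hri'n, hri1]
    have c30 : (0:ℝ) ≤ (s:ℝ)/n := by positivity
    have c4 : ((s:ℝ)/n)^(l*t - s) ≤ ((7:ℝ)/12)^(l*t - s) := pow_le_pow_left₀ c30 c3 _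
    have flrt : (6:ℝ)*t ≤ (l:ℝ)*t := mul_le_mul_of_nonneg_right hlr6 (by linarith)
    have flr2 : (l:ℝ) ≤ (l:ℝ)*t := le_mul_of_one_le_right hlr0.le ht1r
    have c5 : ((7:ℝ)/12)^(l*t - s) ≤ ((7:ℝ)/12) ^ (((2/3)*(l:ℝ))*(t:ℝ)) := by
      rw [← Real.rpow_natCast ((7:ℝ)/12) (l*t - s)]
      apply Real.rpow_le_rpow_of_exponent_ge (by norm_num) (by norm_num)
      have hcast : ((l*t - s : ℕ):ℝ) = (l:ℝ)*t - s := by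
        rw [Nat.cast_sub hslt]; push_cast; ring
      rw [hcast, hsr]
      linarith only [flrt, flr2, hl2]
    have c6 : (3:ℝ)^s ≤ (3:ℝ) ^ ((1+(l:ℝ)/6)*(t:ℝ)) := by
      rw [← Real.rpow_natCast 3 s]
      apply Real.rpow_le_rpow_of_exponent_le (by norm_num)
      rw [hsr]
      linarith only [hl2, flr2]
    have qpow : q^t = (n:ℝ)^t * ((3:ℝ)^((1+(l:ℝ)/6)*(t:ℝ)) *
        ((7:ℝ)/12)^(((2/3)*(l:ℝ))*(t:ℝ))) := by
      rw [hqdef, mul_pow, mul_pow,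
        ← Real.rpow_natCast ((3:ℝ)^(1+(l:ℝ)/6)) t,
        ← Real.rpow_natCast (((7:ℝ)/12)^((2/3)*(l:ℝ))) t,
        ← Real.rpow_mul (by norm_num : (0:ℝ) ≤ 3),
        ← Real.rpow_mul (by norm_num : (0:ℝ) ≤ 7/12)]
      ring
    calc ((N.choose t):ℝ) * ((n.choose s:ℝ) * ((s:ℝ)/n)^(l*t))
        = ((N.choose t):ℝ) * (((n.choose s:ℝ) * ((s:ℝ)/n)^s) * ((s:ℝ)/n)^(l*t - s)) := by
          rw [powsplit]; ring
      _ ≤ (n:ℝ)^t * ((3:ℝ)^s * ((7:ℝ)/12)^(l*t - s)) := by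
          apply mul_le_mul c1 (mul_le_mul key2 c4 (by positivity) (by positivity))
            (by positivity) (by positivity)
      _ ≤ (n:ℝ)^t * ((3:ℝ)^((1+(l:ℝ)/6)*(t:ℝ)) * ((7:ℝ)/12)^(((2/3)*(l:ℝ))*(t:ℝ))) := by
          apply mul_le_mul_of_nonneg_left _ (by positivity)
          apply mul_le_mul c6 c5 (by positivity) (Real.rpow_nonneg (by norm_num) _)
      _ = q^t := qpow.symm
  have large_bound : ∀ t ∈ Icc 1 N, ¬ (2*t ≤ N) →
      ((N.choose t : ℝ) * ((n.choose (t + ri' - 1) : ℝ) *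
        ((((t + ri' - 1 : ℕ) : ℝ) / n) ^ (l * t)))) ≤ A * p ^ (N - t) := by
    intro t ht hbig
    obtain ⟨ht1, htN⟩ := mem_Icc.1 ht
    push_neg at hbig
    set u := N - t with hu
    set s := t + ri' - 1 with hs
    have hsu : s = n - (u+1) := by omega
    have hun : u + 1 ≤ n := by omega
    have d1 : ((N.choose t):ℝ) ≤ (n:ℝ)^u := by
      have h1 : N.choose u = N.choose t := by
        rw [hu]; exact Nat.choose_symm htN
      have h2 : N.choose u ≤ N ^ u := Nat.choose_le_pow N u
      have h3 : N ^ u ≤ n ^ u := Nat.pow_le_pow_left (by omega) u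
      rw [← h1]; exact_mod_cast h2.trans h3
    have d2 : ((n.choose s):ℝ) ≤ (n:ℝ)^(u+1) := by
      have hsnn : s ≤ n := by omega
      have h1 : n.choose (n - s) = n.choose s := Nat.choose_symm hsnn
      have hns : n - s = u + 1 := by omega
      rw [← h1, hns]
      have h2 : n.choose (u+1) ≤ n ^ (u+1) := Nat.choose_le_pow n (u+1)
      exact_mod_cast h2
    have hsr : (s:ℝ) = (n:ℝ) - ((u:ℝ)+1) := by
      rw [hsu, Nat.cast_sub hun]; push_cast; ring
    have d3 : ((s:ℝ)/n)^(l*t) ≤ Real.exp (-(5/12)*(l:ℝ)*((u:ℝ)+1)) := by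
      have hx : (s:ℝ)/n = 1 - ((u:ℝ)+1)/n := by
        rw [hsr]; field_simp
      have h1 : (s:ℝ)/n ≤ Real.exp (-(((u:ℝ)+1)/n)) := by
        rw [hx]
        have hexp := Real.add_one_le_exp (-(((u:ℝ)+1)/n))
        linarith only [hexp]
      have h2 : ((s:ℝ)/n)^(l*t) ≤ (Real.exp (-(((u:ℝ)+1)/n)))^(l*t) :=
        pow_le_pow_left₀ (by positivity) h1 _
      have h3 : (Real.exp (-(((u:ℝ)+1)/n)))^(l*t)
          = Real.exp (((l*t : ℕ):ℝ) * (-(((u:ℝ)+1)/n))) := (Real.exp_nat_mul _ _).symm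
      have ht512 : (5/12:ℝ)*n ≤ t := by
        have hNt : (N:ℝ) < 2*t := by exact_mod_cast hbig
        rw [hNr] at hNt
        linarith only [hNt, hri'n]
      have h4 : ((l*t : ℕ):ℝ) * (-(((u:ℝ)+1)/n)) ≤ -(5/12)*(l:ℝ)*((u:ℝ)+1) := by
        push_cast
        have hq1 : (5/12:ℝ) ≤ (t:ℝ)/n := by rw [le_div_iff₀ hn0]; linarith
        have hq2 : (0:ℝ) ≤ (l:ℝ)*((u:ℝ)+1) := by positivity
        have := mul_le_mul_of_nonneg_right hq1 hq2
        have hne : ((t:ℝ)/n) * ((l:ℝ)*((u:ℝ)+1)) = (l:ℝ)*(t:ℝ)*(((u:ℝ)+1)/n) := by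
          field_simp
        linarith only [this, hne]
      calc ((s:ℝ)/n)^(l*t) ≤ (Real.exp (-(((u:ℝ)+1)/n)))^(l*t) := h2
        _ = Real.exp (((l*t : ℕ):ℝ) * (-(((u:ℝ)+1)/n))) := h3
        _ ≤ Real.exp (-(5/12)*(l:ℝ)*((u:ℝ)+1)) := Real.exp_le_exp.2 h4
    have heq : (n:ℝ)^u * ((n:ℝ)^(u+1) * Real.exp (-(5/12)*(l:ℝ)*((u:ℝ)+1))) = A * p^u := by
      rw [hAdef, hpdef, mul_pow, ← Real.exp_nat_mul,
        show (-(5/12)*(l:ℝ)*((u:ℝ)+1)) = (u:ℝ)*(-(5/12)*(l:ℝ)) + (-(5/12)*(l:ℝ)) by ring,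
        Real.exp_add]
      ring
    calc ((N.choose t):ℝ) * ((n.choose s:ℝ) * ((s:ℝ)/n)^(l*t))
        ≤ (n:ℝ)^u * ((n:ℝ)^(u+1) * Real.exp (-(5/12)*(l:ℝ)*((u:ℝ)+1))) := by
          apply mul_le_mul d1 (mul_le_mul d2 d3 (by positivity) (by positivity))
            (by positivity) (by positivity)
      _ = A * p^u := heq
  -- assemble
  have hgeomq : ∑ t ∈ Icc 1 N, q^t ≤ 2*q := by
    rw [← Finset.Ico_add_one_right_eq_Icc, Finset.sum_Ico_eq_sum_range]
    norm_num
    have hstep : ∀ i ∈ range N, q^(1+i) ≤ q*(1/2)^i := by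
      intro i _
      rw [pow_add, pow_one]
      exact mul_le_mul_of_nonneg_left (pow_le_pow_left₀ hq0.le hqhalf i) hq0.le
    calc ∑ i ∈ range N, q^(1+i) ≤ ∑ i ∈ range N, q*(1/2)^i := Finset.sum_le_sum hstep
      _ = q * ∑ i ∈ range N, (1/2:ℝ)^i := by rw [Finset.mul_sum]
      _ ≤ q * 2 := mul_le_mul_of_nonneg_left (sum_geometric_two_le N) hq0.le
      _ = 2*q := by ring
  have hgeomp : ∑ t ∈ Icc 1 N, p^(N-t) ≤ 2 := by
    rw [← Finset.Ico_add_one_right_eq_Icc, Finset.sum_Ico_eq_sum_range]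
    norm_num
    have h1 : ∑ i ∈ range N, p^(N-(1+i)) = ∑ i ∈ range N, p^(N-1-i) := by
      apply Finset.sum_congr rfl
      intro i _
      congr 1
      omega
    rw [h1, Finset.sum_range_reflect (fun i => p^i) N]
    calc ∑ i ∈ range N, p^i ≤ ∑ i ∈ range N, (1/2:ℝ)^i :=
          Finset.sum_le_sum fun i _ => pow_le_pow_left₀ hp0.le hphalf i
      _ ≤ 2 := sum_geometric_two_le N
  have hrne : (r:ℝ) ≠ 0 := ne_of_gt hr0
  have hsum := Finset.sum_filter_add_sum_filter_not (Icc 1 N) (fun t => 2*t ≤ N)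
    (fun t => ((N.choose t : ℝ) * ((n.choose (t + ri' - 1) : ℝ) *
        ((((t + ri' - 1 : ℕ) : ℝ) / n) ^ (l * t)))))
  have S1 : ∑ t ∈ (Icc 1 N).filter (fun t => 2*t ≤ N),
      ((N.choose t : ℝ) * ((n.choose (t + ri' - 1) : ℝ) *
        ((((t + ri' - 1 : ℕ) : ℝ) / n) ^ (l * t)))) ≤ 2*q := by
    calc _ ≤ ∑ t ∈ (Icc 1 N).filter (fun t => 2*t ≤ N), q^t := by
          apply Finset.sum_le_sum
          intro t ht
          exact small_bound t (Finset.mem_of_mem_filter t ht) (Finset.mem_filter.1 ht).2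
      _ ≤ ∑ t ∈ Icc 1 N, q^t := by
          apply Finset.sum_le_sum_of_subset_of_nonneg (Finset.filter_subset _ _)
          intro t _ _
          positivity
      _ ≤ 2*q := hgeomq
  have S2 : ∑ t ∈ (Icc 1 N).filter (fun t => ¬ 2*t ≤ N),
      ((N.choose t : ℝ) * ((n.choose (t + ri' - 1) : ℝ) *
        ((((t + ri' - 1 : ℕ) : ℝ) / n) ^ (l * t)))) ≤ 2*A := by
    calc _ ≤ ∑ t ∈ (Icc 1 N).filter (fun t => ¬ 2*t ≤ N), A * p^(N-t) := by
          apply Finset.sum_le_sum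
          intro t ht
          exact large_bound t (Finset.mem_of_mem_filter t ht) (Finset.mem_filter.1 ht).2
      _ ≤ ∑ t ∈ Icc 1 N, A * p^(N-t) := by
          apply Finset.sum_le_sum_of_subset_of_nonneg (Finset.filter_subset _ _)
          intro t _ _
          positivity
      _ = A * ∑ t ∈ Icc 1 N, p^(N-t) := by rw [Finset.mul_sum]
      _ ≤ A * 2 := mul_le_mul_of_nonneg_left hgeomp hA0.le
      _ = 2*A := by ring
  have hfinal : 2*q + 2*A ≤ ε/r := by
    have h1 : 2*(ε/(4*r)) + 2*(ε/(4*r)) = ε/r := by field_simp; ring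
    linarith only [hqle, hAle, h1]
  linarith only [hsum, S1, S2, hfinal]

private lemma hterm_lemma (n ri' l j t : ℕ) (hj : 1 ≤ j) (hn : (0:ℝ) < n)
    (hri'0 : 0 < ri') (ht1 : 1 ≤ t) (htN : t ≤ n - ri') :
    (((n - ri').choose t * (n.choose (t + ri' - 1) *
      ((((t + ri' - 1) * n ^ (j - 1)) ^ (l * t)) *
        ((n ^ j) ^ (l * ((n - ri') - t))))) : ℕ) : ℝ)
    = ((n - ri').choose t : ℝ) * ((n.choose (t + ri' - 1) : ℝ) *
        ((((t + ri' - 1 : ℕ) : ℝ) / n) ^ (l * t)))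
      * (((n ^ j) ^ (l * (n - ri')) : ℕ) : ℝ) := by
  have hmulsplit : l * (n - ri') = l * t + l * ((n - ri') - t) := by
    rw [← Nat.mul_add]
    congr 1
    omega
  have hnj : ((n:ℝ))^j = n * (n:ℝ)^(j-1) := by
    conv_lhs => rw [show j = 1 + (j-1) by omega]
    rw [pow_add, pow_one]
  have h1 : (1:ℕ) ≤ t + ri' := by omega
  have hc : ((t + ri' - 1:ℕ):ℝ) = (t:ℝ) + (ri':ℝ) - 1 := by
    rw [Nat.cast_sub h1]
    push_cast
    ring
  have key : ((t:ℝ) + (ri':ℝ) - 1) * (n:ℝ)^(j-1)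
      = (((t:ℝ) + (ri':ℝ) - 1)/n) * (n:ℝ)^j := by
    rw [hnj]
    field_simp
  conv_rhs => rw [hmulsplit]
  push_cast [hc]
  rw [pow_add, key, mul_pow]
  ring

set_option maxHeartbeats 1000000 in
/-- Lemma 10: for a fixed `j ∈ {1,…,d−1}` and `i ∈ {1,…,j}`, consider `n − r'ᵢ` columns
of the `j`-th unfolding of a random sampling pattern, where the set of observed positions
of each column is the image of `l` i.i.d. draws uniform on its `n^j` cells `{1,…,n}^j`,
independently across columns (modelled by the uniform counting probability on
`Fin (n-r'ᵢ) → Fin l → (Fin j → Fin n)`). Under the stated conditions, with probability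
at least `1 − ε/r` every nonempty subfamily `T` of columns sees at least `|T| + r'ᵢ`
distinct values of the `i`-th coordinate. -/
theorem stmt10 (d j i : ℕ) (hd : 2 ≤ d) (hj1 : 1 ≤ j) (hjd : j ≤ d - 1)
    (hi1 : 1 ≤ i) (hij : i ≤ j)
    (rk : ℕ → ℕ) (hrk0 : rk 0 = 1) (hrkd : rk d = 1)
    (hrkpos : ∀ k, k ≤ d → 0 < rk k)
    (n ri' r l : ℕ) (hn0 : 0 < n) (hri'0 : 0 < ri') (hr0 : 0 < r) (hl0 : 0 < l)
    (ε : ℝ) (hε0 : 0 < ε) (hε1 : ε < 1)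
    (hri'n : (ri' : ℝ) ≤ (n : ℝ) / 6)
    (hnbig : max 200 (∑ k ∈ Finset.Icc 1 (d - 1), rk (k - 1) * rk k) < n)
    (hrS : r ≤ ∑ k ∈ Finset.Icc 1 (d - 1), rk (k - 1) * rk k)
    (hlb : (l : ℝ) >
      max (27 * Real.log (n / ε) + 9 * Real.log (2 * r / ε) + 18) (6 * ri')) :
    1 - ε / r ≤
      (Nat.card {ω : Fin (n - ri') → Fin l → (Fin j → Fin n) //
          ∀ T : Finset (Fin (n - ri')), T.Nonempty →
            T.card + ri' ≤
              ((T.biUnion fun c => Finset.univ.image (ω c)).image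
                (fun v => v ⟨i - 1, by omega⟩)).card} : ℝ) /
        (Fintype.card (Fin (n - ri') → Fin l → (Fin j → Fin n)) : ℝ) := by
  have hn200 : 200 < n := lt_of_le_of_lt (le_max_left _ _) hnbig
  have hrn : r < n := lt_of_le_of_lt (hrS.trans (le_max_right 200 _)) hnbig
  have hnr0 : (0:ℝ) < n := by positivity
  have hn200r : (200:ℝ) < n := by exact_mod_cast hn200
  have hrin : ri' < n := by
    have : (ri':ℝ) < n := by linarith only [hri'n, hn200r]
    exact_mod_cast this
  have hl1 : 27 * Real.log (n / ε) + 9 * Real.log (2 * r / ε) + 18 < l :=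
    lt_of_le_of_lt (le_max_left _ _) hlb
  have hl2 : 6 * (ri' : ℝ) < l := by
    have := lt_of_le_of_lt
      (le_max_right (27 * Real.log (n / ε) + 9 * Real.log (2 * r / ε) + 18) (6 * (ri':ℝ))) hlb
    exact_mod_cast this
  have hT : Fintype.card (Fin (n - ri') → Fin l → (Fin j → Fin n))
      = (n ^ j) ^ (l * (n - ri')) := by
    rw [Fintype.card_fun, Fintype.card_fun, Fintype.card_fun, Fintype.card_fin,
      Fintype.card_fin, Fintype.card_fin, Fintype.card_fin, pow_mul]
  rw [Nat.card_eq_fintype_card, Fintype.card_subtype]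
  apply glue
  · rw [hT]
    positivity
  · have hcount := count_bad_le n ri' l j ⟨i - 1, by omega⟩ hri'0 hrin
    have hana := analytic n ri' r l ε hn200 hri'0 hr0 (le_of_lt hrn) hε0 hε1 hri'n hl1 hl2
    refine (Nat.cast_le.mpr hcount).trans ?_
    have hsum : ((∑ t ∈ Icc 1 (n - ri'),
        (n - ri').choose t * (n.choose (t + ri' - 1) *
          ((((t + ri' - 1) * n ^ (j - 1)) ^ (l * t)) *
            ((n ^ j) ^ (l * ((n - ri') - t))))) : ℕ) : ℝ)
        = (∑ t ∈ Icc 1 (n - ri'), ((n - ri').choose t : ℝ) * ((n.choose (t + ri' - 1) : ℝ) *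
            ((((t + ri' - 1 : ℕ) : ℝ) / n) ^ (l * t))))
          * (((n ^ j) ^ (l * (n - ri')) : ℕ) : ℝ) := by
      rw [Nat.cast_sum, Finset.sum_mul]
      apply Finset.sum_congr rfl
      intro t ht
      obtain ⟨ht1, htN⟩ := Finset.mem_Icc.1 ht
      exact hterm_lemma n ri' l j t hj1 hnr0 hri'0 ht1 htN
    rw [hsum, hT]
    exact mul_le_mul_of_nonneg_right hana (by positivity)
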